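/- For the polynomial sequence (P_m) of the construction with each b_k a real number satisfying b_k < −6 and with a_k = −√(−b_k) for every k, the set H^k_m is path connected (and hence connected) for every k ≥ 1 and every m ≥ 0. -/

import Mathlib

open Filter Set Metric
open scoped Topology
open Complex
open scoped Real

noncomputable section

/-- `seqQ P m n` is the composition `P n ∘ ⋯ ∘ P (m+1)` (the identity for `n ≤ m`). -/
def seqQ (P : ℕ → ℂ → ℂ) (m : ℕ) : ℕ → ℂ → ℂ
  | 0 => id
  | n + 1 => if n + 1 ≤ m then id else P (n + 1) ∘ seqQ P m n

def csqrt (w : ℂ) : ℂ := w ^ (1/2 : ℂ)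

lemma csqrt_sq {w : ℂ} (hw : w ≠ 0) : (csqrt w) ^ 2 = w := by
  have : (1/2 : ℂ) = ((2:ℕ) : ℂ)⁻¹ := by norm_num
  rw [csqrt, this, Complex.cpow_nat_inv_pow _ two_ne_zero]

lemma csqrt_re_pos {w : ℂ} (hw : 0 < w.re) : 0 < (csqrt w).re := by
  have hw0 : w ≠ 0 := by intro h; simp [h] at hw
  rw [csqrt, Complex.cpow_def_of_ne_zero hw0, Complex.exp_re]
  have harg : |Complex.arg w| < π / 2 := Complex.abs_arg_lt_pi_div_two_iff.2 (Or.inl hw)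
  have him : (Complex.log w * (1/2)).im = Complex.arg w / 2 := by
    simp [Complex.mul_im, Complex.log_im]; ring
  rw [him]
  have : Real.cos (Complex.arg w / 2) > 0 := by
    apply Real.cos_pos_of_mem_Ioo
    constructor <;> [nlinarith [abs_lt.1 harg, Real.pi_pos]; nlinarith [abs_lt.1 harg, Real.pi_pos]]
  positivity


lemma csqrt_ne_zero {w : ℂ} (hw : w ≠ 0) : csqrt w ≠ 0 := by
  intro h
  apply hw
  rw [← csqrt_sq hw, h]; ring

lemma csqrt_ofReal {x : ℝ} (hx : 0 ≤ x) : csqrt (x:ℂ) = (Real.sqrt x : ℂ) := by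
  rw [csqrt, show (1/2 : ℂ) = ((1/2 : ℝ) : ℂ) by norm_num, ← Complex.ofReal_cpow hx,
    ← Real.sqrt_eq_rpow]

lemma csqrt_continuousAt {w : ℂ} (hw : 0 < w.re) : ContinuousAt csqrt w :=
  continuousAt_cpow_const (Complex.mem_slitPlane_iff.2 (Or.inl hw))

lemma re_pos_of_ne_zero_of_re_pos {w : ℂ} (hw : 0 < w.re) : w ≠ 0 := by
  intro h; simp [h] at hw

lemma sqrt_lift_exists {δ : ℝ → ℂ} (hδc : Continuous δ) (hδ : ∀ s ∈ Icc (0:ℝ) 1, δ s ≠ 0)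
    {y : ℂ} (hy : y ^ 2 = δ 0) :
    ∃ σ : ℝ → ℂ, Continuous σ ∧ σ 0 = y ∧ ∀ s ∈ Icc (0:ℝ) 1, σ s ^ 2 = δ s := by
  set A := {t | t ∈ Icc (0:ℝ) 1 ∧
    ∃ σ : ℝ → ℂ, Continuous σ ∧ σ 0 = y ∧ ∀ s ∈ Icc (0:ℝ) t, σ s ^ 2 = δ s} with hA
  have h0A : (0:ℝ) ∈ A := by
    refine ⟨⟨le_refl _, zero_le_one⟩, fun _ => y, continuous_const, rfl, ?_⟩
    intro s hs
    have : s = 0 := le_antisymm hs.2 hs.1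
    rw [this, hy]
  have hbdd : BddAbove A := ⟨1, fun t ht => ht.1.2⟩
  set u := sSup A with hu
  have hu0 : 0 ≤ u := le_csSup hbdd h0A
  have hu1 : u ≤ 1 := csSup_le ⟨0, h0A⟩ fun t ht => ht.1.2
  have hδu : δ u ≠ 0 := hδ u ⟨hu0, hu1⟩
  obtain ⟨ε, hε, hball⟩ : ∃ ε > 0, ∀ s : ℝ, dist s u < ε →
      dist (δ s) (δ u) < ‖δ u‖ := by
    have := Metric.continuous_iff.mp hδc u (‖δ u‖) (by
      simpa [AbsoluteValue.pos_iff] using hδu)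
    exact this
  obtain ⟨t, htA, htgt⟩ : ∃ t ∈ A, u - ε/2 < t :=
    exists_lt_of_lt_csSup ⟨0, h0A⟩ (by linarith)
  obtain ⟨σ, hσc, hσ0, hσsq⟩ := htA.2
  have ht0 : 0 ≤ t := htA.1.1
  have ht1 : t ≤ 1 := htA.1.2
  have htu : t ≤ u := le_csSup hbdd htA
  set v := min (u + ε/2) 1 with hv
  have huv : u ≤ v := le_min (by linarith) hu1
  have htv : t ≤ v := le_trans htu huv
  have hreg : ∀ s, t ≤ s → s ≤ v → ‖δ s - δ u‖ < ‖δ u‖ := by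
    intro s h1 h2
    have h3 : s ≤ u + ε/2 := le_trans h2 (min_le_left _ _)
    have := hball s (by rw [Real.dist_eq]; rw [abs_lt]; constructor <;> linarith)
    rwa [Complex.dist_eq] at this
  set cl : ℝ → ℝ := fun s => max t (min s v) with hcl
  have hclcont : Continuous cl := continuous_const.max (continuous_id.min continuous_const)
  have hclmem : ∀ s, t ≤ cl s ∧ cl s ≤ v := fun s =>
    ⟨le_max_left _ _, max_le htv (min_le_right _ _)⟩
  have hrat : ∀ s, 0 < ((δ (cl s)) / (δ u)).re := by
    intro s
    have h := hreg (cl s) (hclmem s).1 (hclmem s).2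
    have habs : ‖δ (cl s)/δ u - 1‖ < 1 := by
      rw [show δ (cl s)/δ u - 1 = (δ (cl s) - δ u)/δ u by field_simp, norm_div]
      rw [div_lt_one (by simpa [AbsoluteValue.pos_iff] using hδu)]
      exact h
    have hre := Complex.abs_re_le_norm (δ (cl s)/δ u - 1)
    rw [Complex.sub_re, Complex.one_re] at hre
    have := abs_le.1 hre
    linarith [this.1, habs]
  have hrat' : ∀ s, δ (cl s) / δ u ≠ 0 := fun s => re_pos_of_ne_zero_of_re_pos (hrat s)
  set g : ℝ → ℂ := fun s => csqrt (δ (cl s) / δ u) with hg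
  have hgc : Continuous g := by
    rw [continuous_iff_continuousAt]
    intro s
    have h1 : ContinuousAt (fun x : ℝ => δ (cl x) / δ u) s :=
      ((hδc.comp hclcont).div_const (δ u)).continuousAt
    exact ContinuousAt.comp (x := s) (g := csqrt) (csqrt_continuousAt (hrat s)) h1
  have hgsq : ∀ s, (g s)^2 = δ (cl s) / δ u := fun s => csqrt_sq (hrat' s)
  have hclt : cl t = t := by
    simp [hcl, min_eq_left htv]
  have hgt0 : g t ≠ 0 := by
    intro h
    apply hrat' t
    rw [← hgsq t, h]; ring
  set c := σ t / g t with hcdef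
  have hσt : σ t ^ 2 = δ t := hσsq t ⟨ht0, le_refl _⟩
  have hδt : δ t ≠ 0 := hδ t ⟨ht0, ht1⟩
  have hc2 : c ^ 2 = δ u := by
    rw [hcdef, div_pow, hσt, hgsq t, hclt]
    field_simp
  set σ' : ℝ → ℂ := fun s => if s ≤ t then σ s else c * g s with hσ'
  have hσ'c : Continuous σ' := by
    apply Continuous.if_le hσc (continuous_const.mul hgc) continuous_id continuous_const
    intro x hx
    simp only [id_eq] at hx
    subst hx
    exact (div_mul_cancel₀ _ hgt0).symm
  have hvA : v ∈ A := by
    refine ⟨⟨le_trans ht0 htv, min_le_right _ _⟩, σ', hσ'c, ?_, ?_⟩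
    · simp only [hσ', if_pos ht0, hσ0]
    · intro s hs
      by_cases hst : s ≤ t
      · simp only [hσ', if_pos hst]
        exact hσsq s ⟨hs.1, hst⟩
      · push_neg at hst
        simp only [hσ', if_neg (not_le.mpr hst)]
        have hcls : cl s = s := by
          rw [hcl]
          simp [min_eq_left hs.2, max_eq_right (le_of_lt hst)]
        rw [mul_pow, hc2, hgsq s, hcls]
        field_simp
  have hvu : v ≤ u := le_csSup hbdd hvA
  have hueq : u = 1 := by
    rcases le_or_gt (u + ε/2) 1 with h | h
    · exfalso
      have : v = u + ε/2 := min_eq_left h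
      rw [this] at hvu; linarith
    · have : v = 1 := min_eq_right (le_of_lt h)
      rw [this] at hvu
      linarith
  have hv1 : v = 1 := by
    rw [hv, hueq]
    exact min_eq_right (by linarith)
  obtain ⟨⟨_, _⟩, σ'', h1, h2, h3⟩ := hvA
  rw [hv1] at h3
  exact ⟨σ'', h1, h2, h3⟩

lemma sqrt_lift_unique {δ f g : ℝ → ℂ} (hf : Continuous f) (hg : Continuous g)
    (hfsq : ∀ s ∈ Icc (0:ℝ) 1, f s ^ 2 = δ s) (hgsq : ∀ s ∈ Icc (0:ℝ) 1, g s ^ 2 = δ s)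
    (hδ : ∀ s ∈ Icc (0:ℝ) 1, δ s ≠ 0) (h0 : f 0 = g 0) :
    ∀ s ∈ Icc (0:ℝ) 1, f s = g s := by
  set U : Set ℝ := {x | f x + g x ≠ 0} with hU
  set V : Set ℝ := {x | f x - g x ≠ 0} with hV
  have hUo : IsOpen U := isOpen_compl_iff.mpr (isClosed_eq (hf.add hg) continuous_const)
  have hVo : IsOpen V := isOpen_compl_iff.mpr (isClosed_eq (hf.sub hg) continuous_const)
  have hprod : ∀ s ∈ Icc (0:ℝ) 1, (f s - g s) * (f s + g s) = 0 := by
    intro s hs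
    linear_combination (hfsq s hs) - (hgsq s hs)
  have hfne : ∀ s ∈ Icc (0:ℝ) 1, f s ≠ 0 := by
    intro s hs h
    exact hδ s hs (by rw [← hfsq s hs, h]; ring)
  have hsub : Icc (0:ℝ) 1 ⊆ U ∪ V := by
    intro s hs
    by_contra h
    simp only [hU, hV, mem_setOf_eq, not_not, mem_union] at h
    push_neg at h
    obtain ⟨h1, h2⟩ := h
    exact hfne s hs (by linear_combination (h1 + h2) / 2)
  by_contra hcon
  push_neg at hcon
  obtain ⟨s₀, hs₀, hne⟩ := hcon
  have hNV : (Icc (0:ℝ) 1 ∩ V).Nonempty := ⟨s₀, hs₀, sub_ne_zero.mpr hne⟩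
  have hNU : (Icc (0:ℝ) 1 ∩ U).Nonempty := by
    refine ⟨0, ⟨le_refl _, zero_le_one⟩, ?_⟩
    simp only [hU, mem_setOf_eq, h0]
    intro h
    exact hfne 0 ⟨le_refl _, zero_le_one⟩ (by rw [h0]; linear_combination h / 2)
  obtain ⟨x, hxI, hxU, hxV⟩ := isPreconnected_Icc U V hUo hVo hsub hNU hNV
  exact hxV (by
    rcases mul_eq_zero.mp (hprod x hxI) with h | h
    · exact h
    · exact absurd h hxU)

lemma sq_preimage_pathConnected {T : Set ℂ} (h0 : (0:ℂ) ∈ T) (hT : IsPathConnected T) :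
    IsPathConnected ((fun z : ℂ => z ^ 2) ⁻¹' T) := by
  have h0S : (0:ℂ) ∈ (fun z : ℂ => z ^ 2) ⁻¹' T := by
    simp only [mem_preimage]
    simpa using h0
  refine ⟨0, h0S, ?_⟩
  intro z hz
  suffices h : JoinedIn ((fun z : ℂ => z ^ 2) ⁻¹' T) z 0 by exact h.symm
  obtain ⟨γ, hγ⟩ : JoinedIn T (z^2) 0 := hT.joinedIn _ hz _ h0
  set δ : ℝ → ℂ := ⇑γ.extend with hδdef
  have hδc : Continuous δ := γ.continuous_extend
  have hδT : ∀ s : ℝ, δ s ∈ T := by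
    intro s
    have hmem : δ s ∈ range γ.extend := mem_range_self s
    rw [γ.extend_range] at hmem
    obtain ⟨t, ht⟩ := hmem
    rw [← ht]; exact hγ t
  have hδ0 : δ 0 = z ^ 2 := γ.extend_zero
  have hδ1 : δ 1 = 0 := γ.extend_one
  set Z := Icc (0:ℝ) 1 ∩ δ ⁻¹' {0} with hZ
  have hZne : (1:ℝ) ∈ Z := ⟨⟨zero_le_one, le_refl _⟩, hδ1⟩
  have hZclosed : IsClosed Z :=
    isClosed_Icc.inter (isClosed_singleton.preimage hδc)
  have hZbdd : BddBelow Z := ⟨0, fun t ht => ht.1.1⟩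
  set t₀ := sInf Z with ht₀def
  have ht₀Z : t₀ ∈ Z := hZclosed.csInf_mem ⟨1, hZne⟩ hZbdd
  have ht₀0 : 0 ≤ t₀ := ht₀Z.1.1
  have ht₀1 : t₀ ≤ 1 := ht₀Z.1.2
  have hδt₀ : δ t₀ = 0 := ht₀Z.2
  have hne : ∀ s, 0 ≤ s → s < t₀ → δ s ≠ 0 := by
    intro s h1 h2 h
    have hsZ : s ∈ Z := ⟨⟨h1, le_trans (le_of_lt h2) ht₀1⟩, h⟩
    exact absurd (csInf_le hZbdd hsZ) (not_le.mpr h2)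
  rcases eq_or_lt_of_le ht₀0 with heq | hpos
  · have hz2 : z ^ 2 = 0 := by rw [← hδ0]; rw [show (0:ℝ) = t₀ from heq]; exact hδt₀
    have hz0 : z = 0 := pow_eq_zero_iff two_ne_zero |>.mp hz2
    rw [hz0]
    exact JoinedIn.refl h0S
  · have key : ∀ v : ℝ, ∃ σ : ℝ → ℂ, Continuous σ ∧ σ 0 = z ∧
        (0 < v → v < t₀ → ∀ s ∈ Icc (0:ℝ) 1, σ s ^ 2 = δ (s * v)) := by
      intro v
      by_cases hv : 0 < v ∧ v < t₀
      · have hsv : ∀ s ∈ Icc (0:ℝ) 1, δ (s * v) ≠ 0 := by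
          intro s hs
          refine hne (s*v) (mul_nonneg hs.1 (le_of_lt hv.1)) ?_
          calc s * v ≤ 1 * v := by nlinarith [hs.2, hv.1]
          _ = v := one_mul v
          _ < t₀ := hv.2
        obtain ⟨σ, h1, h2, h3⟩ := sqrt_lift_exists (δ := fun s => δ (s * v))
          (hδc.comp (continuous_id.mul continuous_const)) hsv
          (y := z) (by show z ^ 2 = δ (0 * v); rw [zero_mul, hδ0])
        exact ⟨σ, h1, h2, fun _ _ => h3⟩
      · exact ⟨fun _ => z, continuous_const, rfl, fun h1 h2 => absurd ⟨h1, h2⟩ hv⟩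
    choose σf hσfc hσf0 hσfsq using key
    have consist : ∀ v v', 0 < v → v < t₀ → 0 < v' → v' < t₀ → v ≤ v' →
        ∀ s ∈ Icc (0:ℝ) 1, σf v s = σf v' (s * (v / v')) := by
      intro v v' hv1 hv2 hv'1 hv'2 hle s hs
      refine sqrt_lift_unique (δ := fun x => δ (x * v)) (hσfc v)
        ((hσfc v').comp (continuous_id.mul continuous_const))
        (hσfsq v hv1 hv2) ?_ ?_ ?_ s hs
      · intro x hx
        have hvv' : 0 ≤ v / v' := le_of_lt (div_pos hv1 hv'1)
        have hmem : x * (v/v') ∈ Icc (0:ℝ) 1 := by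
          refine ⟨mul_nonneg hx.1 hvv', ?_⟩
          have h2 : x * (v/v') ≤ 1 * (v/v') := by nlinarith [hx.2]
          rw [one_mul] at h2
          have h3 : v/v' ≤ 1 := by rw [div_le_one hv'1]; exact hle
          linarith
        have hval := hσfsq v' hv'1 hv'2 _ hmem
        have harg : (x * (v/v')) * v' = x * v := by field_simp
        exact (by simpa only [harg] using hval : σf v' (x * (v / v')) ^ 2 = δ (x * v))
      · intro x hx
        refine hne (x * v) (mul_nonneg hx.1 (le_of_lt hv1)) ?_
        calc x * v ≤ 1 * v := by nlinarith [hx.2, hv1]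
        _ = v := one_mul v
        _ < t₀ := hv2
      · simp [hσf0]
    set F : ℝ → ℂ := fun t => σf (t₀*(t+1)/2) (2*t/(t+1)) with hF
    set p : ℝ → ℂ := fun t => if 1 ≤ t then 0 else F t with hp
    have hFval : ∀ t, 0 ≤ t → t < 1 → F t ^ 2 = δ (t * t₀) := by
      intro t h1 h2
      have hv1 : 0 < t₀*(t+1)/2 := by positivity
      have hv2 : t₀*(t+1)/2 < t₀ := by nlinarith
      have hs : 2*t/(t+1) ∈ Icc (0:ℝ) 1 := by
        constructor
        · positivity
        · rw [div_le_one (by linarith)]; linarith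
      have := hσfsq _ hv1 hv2 _ hs
      rw [hF]
      rw [this]
      congr 1
      field_simp
    have hpsq : ∀ t ∈ Icc (0:ℝ) 1, p t ^ 2 = δ (t * t₀) := by
      intro t ht
      rcases eq_or_lt_of_le ht.2 with h | h
      · rw [hp]
        simp only [h, le_refl, if_pos, one_mul, hδt₀]
        norm_num
      · rw [hp]
        simp only [if_neg (not_le.mpr h)]
        exact hFval t ht.1 h
    have hpcont : ContinuousOn p (Icc (0:ℝ) 1) := by
      intro t ht
      rcases eq_or_lt_of_le ht.2 with h | h
      · -- t = 1 : squeeze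
        have hp1 : p t = 0 := by rw [hp]; simp [h.ge, h]
        rw [ContinuousWithinAt, hp1]
        refine squeeze_zero_norm' (a := fun x => Real.sqrt (‖δ (x * t₀)‖)) ?_ ?_
        · filter_upwards [self_mem_nhdsWithin] with x hx
          have := hpsq x hx
          have habs : ‖p x‖ ^ 2 = ‖δ (x * t₀)‖ := by
            rw [← norm_pow, this]
          rw [show ‖p x‖ = ‖p x‖ from rfl]
          rw [← Real.sqrt_sq (norm_nonneg (p x)), habs]
        · have hgc : Continuous fun x : ℝ => Real.sqrt (‖δ (x * t₀)‖) :=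
            Real.continuous_sqrt.comp (continuous_norm.comp
              (hδc.comp (continuous_id.mul continuous_const)))
          have h2 : Tendsto (fun x : ℝ => Real.sqrt (‖δ (x * t₀)‖))
              (𝓝[Icc (0:ℝ) 1] t) (𝓝 (Real.sqrt (‖δ (t * t₀)‖))) :=
            (hgc.tendsto t).mono_left nhdsWithin_le_nhds
          have h3 : δ (t * t₀) = 0 := by rw [h, one_mul, hδt₀]
          rw [h3] at h2
          simpa using h2
      · -- t < 1
        set t' := (t+1)/2 with ht'
        have htt' : t < t' := by rw [ht']; linarith
        have ht'1 : t' < 1 := by rw [ht']; linarith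
        set v' := t₀*(t'+1)/2 with hv'def
        have hv'1 : 0 < v' := by rw [hv'def, ht']; nlinarith [ht.1, hpos]
        have hv'2 : v' < t₀ := by rw [hv'def, ht']; nlinarith [hpos]
        have hagree : ∀ x ∈ Icc (0:ℝ) 1, x < t' → p x = σf v' (x * t₀ / v') := by
          intro x hx hxt'
          have hx1 : x < 1 := lt_of_lt_of_le hxt' (le_of_lt ht'1)
          rw [hp]
          simp only [if_neg (not_le.mpr hx1)]
          show σf (t₀*(x+1)/2) (2*x/(x+1)) = σf v' (x * t₀ / v')
          have hvx1 : 0 < t₀*(x+1)/2 := by nlinarith [hx.1, hpos]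
          have hvx2 : t₀*(x+1)/2 < t₀ := by nlinarith [hx.1]
          have hle : t₀*(x+1)/2 ≤ v' := by rw [hv'def]; nlinarith [hpos]
          have hs : 2*x/(x+1) ∈ Icc (0:ℝ) 1 := by
            constructor
            · have := hx.1; positivity
            · rw [div_le_one (by linarith [hx.1])]; linarith [hx1]
          have := consist _ _ hvx1 hvx2 hv'1 hv'2 hle _ hs
          rw [this]
          congr 1
          have hx1' : x + 1 ≠ 0 := by linarith [hx.1]
          field_simp
        have hGc : ContinuousWithinAt (fun x => σf v' (x * t₀ / v')) (Icc (0:ℝ) 1) t :=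
          (((hσfc v').comp ((continuous_id.mul continuous_const).div_const v')).continuousAt).continuousWithinAt
        refine hGc.congr_of_eventuallyEq ?_ (hagree t ht htt')
        have hIio : Iio t' ∈ 𝓝[Icc (0:ℝ) 1] t := nhdsWithin_le_nhds (Iio_mem_nhds htt')
        filter_upwards [hIio, self_mem_nhdsWithin] with x hx1 hx2
        exact hagree x hx2 hx1
    -- assemble path
    set cl : ℝ → ℝ := fun s => max 0 (min s 1) with hcl
    have hclcont : Continuous cl := continuous_const.max (continuous_id.min continuous_const)
    have hclmem : ∀ s, cl s ∈ Icc (0:ℝ) 1 := fun s =>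
      ⟨le_max_left _ _, max_le (zero_le_one) (min_le_right _ _)⟩
    set q : ℝ → ℂ := fun s => p (cl s) with hq
    have hqc : Continuous q := hpcont.comp_continuous hclcont hclmem
    have hq0 : q 0 = z := by
      have : cl 0 = 0 := by rw [hcl]; simp
      simp only [hq, this, hp]
      rw [if_neg (by norm_num : ¬ (1:ℝ) ≤ 0)]
      show σf (t₀*(0+1)/2) (2*0/(0+1)) = z
      rw [show (2:ℝ)*0/(0+1) = 0 by norm_num]
      exact hσf0 _
    have hq1 : q 1 = 0 := by
      have : cl 1 = 1 := by rw [hcl]; simp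
      simp only [hq, this, hp]
      simp
    have hqS : ∀ s : ℝ, q s ∈ (fun z : ℂ => z ^ 2) ⁻¹' T := by
      intro s
      simp only [mem_preimage]
      show q s ^ 2 ∈ T
      rw [show q s = p (cl s) from rfl, hpsq _ (hclmem s)]
      exact hδT _
    exact ⟨{ toFun := fun t => q t,
             continuous_toFun := hqc.comp continuous_subtype_val,
             source' := hq0,
             target' := hq1 }, fun t => hqS t⟩

lemma csqrt_dist {r : ℝ} (hr : 2 < r) {w : ℂ} (hw : dist w ((r^2 : ℝ) : ℂ) ≤ 2) :
    0 < w.re ∧ w ≠ 0 ∧ dist (-csqrt w) (-(r:ℂ)) ≤ 1 := by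
  rw [Complex.dist_eq] at hw
  have hre_est : |w.re - r^2| ≤ 2 := by
    have h1 := Complex.abs_re_le_norm (w - ((r^2:ℝ):ℂ))
    have h2 : (w - ((r^2:ℝ):ℂ)).re = w.re - r^2 := by
      simp [Complex.sub_re, ← Complex.ofReal_pow]
    rw [h2] at h1
    exact le_trans h1 hw
  have hwre : 0 < w.re := by
    have := abs_le.1 hre_est
    nlinarith
  have hwne : w ≠ 0 := re_pos_of_ne_zero_of_re_pos hwre
  refine ⟨hwre, hwne, ?_⟩
  set s := csqrt w with hs
  have hs2 : s^2 = w := csqrt_sq hwne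
  have hsre : 0 < s.re := csqrt_re_pos hwre
  have hkey : (s - (r:ℂ)) * (s + (r:ℂ)) = w - ((r^2:ℝ):ℂ) := by
    push_cast
    linear_combination hs2
  have habs : ‖s - (r:ℂ)‖ * ‖s + (r:ℂ)‖ ≤ 2 := by
    rw [← norm_mul, hkey]; exact hw
  have hlow : 2 < ‖s + (r:ℂ)‖ := by
    have h1 : (s + (r:ℂ)).re ≤ ‖s + (r:ℂ)‖ := Complex.re_le_norm _
    have h2 : (s + (r:ℂ)).re = s.re + r := by simp [Complex.add_re]
    linarith
  have : ‖s - (r:ℂ)‖ ≤ 1 := by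
    nlinarith [norm_nonneg (s - (r:ℂ))]
  rw [dist_neg_neg, Complex.dist_eq]
  exact this

lemma seqQ_continuous (P : ℕ → ℂ → ℂ) (hP : ∀ n, 1 ≤ n → Continuous (P n)) (m : ℕ) :
    ∀ n, Continuous (seqQ P m n)
  | 0 => continuous_id
  | (n+1) => by
    show Continuous (if n + 1 ≤ m then id else P (n + 1) ∘ seqQ P m n)
    split
    · exact continuous_id
    · exact (hP (n+1) (by omega)).comp (seqQ_continuous P hP m n)


/-- For the constructed polynomial sequence with `b k < −6` real and `a k = −√(−b k)`,
the sets `H^k_m` are path connected (and hence connected) for all `k ≥ 1` and `m ≥ 0`. -/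
theorem H_pathConnected
    (a : ℕ → ℂ) (b : ℕ → ℝ) (mk : ℕ → ℕ) (M : ℕ → ℕ)
    (hb : ∀ k, 1 ≤ k → b k < -6)
    (hmk : ∀ k, 1 ≤ k → 1 ≤ mk k)
    (hinv1 : ∀ k, 1 ≤ k → (2 : ℝ) ^ k < 2 ^ 2 ^ mk k - ‖a k‖)
    (hinv2 : ∀ k, 1 ≤ k →
      (2 : ℝ) ^ k < ((2 : ℝ) ^ 2 ^ mk k - ‖a k‖) ^ 2 - |b k|)
    (hM : ∀ k, M k = ∑ j ∈ Finset.range k, (mk (j + 1) + 1))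
    (P : ℕ → ℂ → ℂ)
    (hPa : ∀ k, 1 ≤ k → P (M k - 1) = fun z => z ^ 2 + a k)
    (hPb : ∀ k, 1 ≤ k → P (M k) = fun z => z ^ 2 + (b k : ℂ))
    (hPother : ∀ m, 1 ≤ m → (∀ k, 1 ≤ k → m ≠ M k - 1 ∧ m ≠ M k) →
      P m = fun z => z ^ 2)
    (G H : ℕ → ℕ → Set ℂ)
    (hGtop : ∀ k, 1 ≤ k → G k (M k - 1) =
      connectedComponentIn (P (M k) ⁻¹' Metric.closedBall 0 2)
        ((Real.sqrt (-b k) : ℝ) : ℂ))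
    (hHtop : ∀ k, 1 ≤ k → H k (M k - 1) =
      connectedComponentIn (P (M k) ⁻¹' Metric.closedBall 0 2)
        (-((Real.sqrt (-b k) : ℝ) : ℂ)))
    (hGdown : ∀ k, 1 ≤ k → ∀ m, m + 2 ≤ M k →
      (∀ j, 1 ≤ j → j < k → m ≠ M j - 1) → G k m = P (m + 1) ⁻¹' G k (m + 1))
    (hGdown' : ∀ k, 1 ≤ k → ∀ m, m + 2 ≤ M k → ∀ j, 1 ≤ j → j < k → m = M j - 1 →
      G k m = P (m + 1) ⁻¹' G k (m + 1) ∩ G j (M j - 1))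
    (hHdown : ∀ k, 1 ≤ k → ∀ m, m + 2 ≤ M k →
      (∀ j, 1 ≤ j → j < k → m ≠ M j - 1) → H k m = P (m + 1) ⁻¹' H k (m + 1))
    (hHdown' : ∀ k, 1 ≤ k → ∀ m, m + 2 ≤ M k → ∀ j, 1 ≤ j → j < k → m = M j - 1 →
      H k m = P (m + 1) ⁻¹' H k (m + 1) ∩ H j (M j - 1))
    (hGup : ∀ k, 1 ≤ k → ∀ m, M k - 1 ≤ m → G k m = seqQ P (M k - 1) m '' G k (M k - 1))
    (hHup : ∀ k, 1 ≤ k → ∀ m, M k - 1 ≤ m → H k m = seqQ P (M k - 1) m '' H k (M k - 1))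
    (ha : ∀ k, 1 ≤ k → a k = -((Real.sqrt (-b k) : ℝ) : ℂ)) :
    ∀ k, 1 ≤ k → ∀ m : ℕ, IsPathConnected (H k m) ∧ IsConnected (H k m) := by
  -- arithmetic facts about M
  have hM0 : M 0 = 0 := by simp [hM]
  have hMsucc : ∀ j, M (j+1) = M j + (mk (j+1) + 1) := by
    intro j; rw [hM, hM, Finset.sum_range_succ]
  have hMgap : ∀ j, M j + 2 ≤ M (j+1) := by
    intro j
    have h1 := hmk (j+1) (by omega)
    rw [hMsucc j]; omega
  have hMlt : ∀ i j, i < j → M i + 2 ≤ M j := by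
    intro i j hij
    induction j with
    | zero => omega
    | succ n ih =>
      rcases Nat.lt_succ_iff_lt_or_eq.mp hij with h | h
      · have h2 := hMgap n; have h3 := ih h; omega
      · subst h; exact hMgap i
  have hM2 : ∀ j, 1 ≤ j → 2 ≤ M j := by
    intro j hj; have := hMlt 0 j hj; omega
  -- facts about sqrt (-b j)
  have hbneg : ∀ j, 1 ≤ j → (0:ℝ) < -b j := fun j hj => by linarith [hb j hj]
  have hrsq : ∀ j, 1 ≤ j → (Real.sqrt (-b j))^2 = -b j :=
    fun j hj => Real.sq_sqrt (le_of_lt (hbneg j hj))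
  have hr2 : ∀ j, 1 ≤ j → 2 < Real.sqrt (-b j) := by
    intro j hj
    have h6 : (6:ℝ) < -b j := by linarith [hb j hj]
    nlinarith [hrsq j hj, Real.sqrt_nonneg (-b j)]
  -- continuity of P n for n ≥ 1
  have hPcont : ∀ n, 1 ≤ n → Continuous (P n) := by
    intro n hn
    by_cases h1 : ∃ j, 1 ≤ j ∧ n = M j - 1
    · obtain ⟨j, hj, hje⟩ := h1
      rw [hje, hPa j hj]
      exact (continuous_pow 2).add continuous_const
    · by_cases h2 : ∃ j, 1 ≤ j ∧ n = M j
      · obtain ⟨j, hj, hje⟩ := h2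
        rw [hje, hPb j hj]
        exact (continuous_pow 2).add continuous_const
      · rw [hPother n hn (fun j hj => ⟨fun hc => h1 ⟨j, hj, hc⟩, fun hc => h2 ⟨j, hj, hc⟩⟩)]
        exact continuous_pow 2
  -- identification of the top-level set
  have K1 : ∀ j, 1 ≤ j → H j (M j - 1) =
      (fun w : ℂ => -csqrt w) '' (closedBall ((((Real.sqrt (-b j))^2 : ℝ)) : ℂ) 2) := by
    intro j hj
    have hrj := hr2 j hj
    set R : ℝ := Real.sqrt (-b j) with hR
    set c : ℂ := ((R^2 : ℝ) : ℂ) with hc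
    have hbc : ((b j : ℝ) : ℂ) = -c := by
      rw [hc, hR, hrsq j hj]; push_cast; ring
    set L := (fun w : ℂ => -csqrt w) '' (closedBall c 2) with hL
    set S := P (M j) ⁻¹' (closedBall (0:ℂ) 2) with hS
    have hmemS : ∀ z : ℂ, z ∈ S ↔ ‖z^2 - c‖ ≤ 2 := by
      intro z
      simp only [hS, mem_preimage, hPb j hj, mem_closedBall, Complex.dist_eq, sub_zero]
      rw [hbc, ← sub_eq_add_neg]
    have hLS : L ⊆ S := by
      rintro _ ⟨w, hw, rfl⟩
      rw [mem_closedBall] at hw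
      obtain ⟨hwre, hwne, _⟩ := csqrt_dist hrj hw
      rw [hmemS]
      have hsq : (-csqrt w)^2 = w := by
        rw [neg_pow]; simp [csqrt_sq hwne]
      rw [hsq, ← Complex.dist_eq]
      exact hw
    have hcball : c ∈ closedBall c 2 := mem_closedBall_self (by norm_num)
    have hcsqrtc : csqrt c = (R : ℂ) := by
      rw [hc, csqrt_ofReal (by positivity)]
      congr 1
      exact Real.sqrt_sq (by linarith)
    have hmemL : -(R:ℂ) ∈ L := ⟨c, hcball, by show -csqrt c = -(R:ℂ); rw [hcsqrtc]⟩
    have hLpc : IsPathConnected L := by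
      apply IsPathConnected.image'
      · exact (convex_closedBall c 2).isPathConnected ⟨c, hcball⟩
      · intro w hw
        rw [mem_closedBall] at hw
        obtain ⟨hwre, -, -⟩ := csqrt_dist hrj hw
        exact ((csqrt_continuousAt hwre).continuousWithinAt).neg
    have hmemS' : -(R:ℂ) ∈ S := hLS hmemL
    have hcomp_sub : connectedComponentIn S (-(R:ℂ)) ⊆ S := connectedComponentIn_subset _ _
    have hSsplit : S ⊆ {z : ℂ | z.re < 0} ∪ {z : ℂ | 0 < z.re} := by
      intro z hz
      rw [hmemS] at hz
      by_contra hcon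
      simp only [mem_union, mem_setOf_eq, not_or, not_lt] at hcon
      have hz0 : z.re = 0 := le_antisymm hcon.2 hcon.1
      have h1 : (z^2 - c).re = -(z.im^2) - R^2 := by
        rw [Complex.sub_re, hc]
        rw [show z^2 = z*z by ring, Complex.mul_re, hz0]
        simp [← Complex.ofReal_pow]
        ring
      have h2 := Complex.abs_re_le_norm (z^2 - c)
      rw [h1] at h2
      have h3 : |(-(z.im^2) - R^2)| = z.im^2 + R^2 := by
        rw [abs_of_nonpos (by nlinarith)]; ring
      rw [h3] at h2
      nlinarith
    have hcomp_left : connectedComponentIn S (-(R:ℂ)) ⊆ {z : ℂ | z.re < 0} := by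
      refine IsPreconnected.subset_left_of_subset_union
        (isOpen_lt Complex.continuous_re continuous_const)
        (isOpen_lt continuous_const Complex.continuous_re) ?_
        (hcomp_sub.trans hSsplit) ?_ isPreconnected_connectedComponentIn
      · rw [Set.disjoint_left]
        intro z h1 h2
        simp only [mem_setOf_eq] at h1 h2
        linarith
      · refine ⟨-(R:ℂ), mem_connectedComponentIn hmemS', ?_⟩
        simp only [mem_setOf_eq, Complex.neg_re, Complex.ofReal_re]
        linarith
    have hcomp_L : connectedComponentIn S (-(R:ℂ)) ⊆ L := by
      intro z hz
      have hzS := hcomp_sub hz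
      have hzre : z.re < 0 := hcomp_left hz
      have hwball : dist (z^2) c ≤ 2 := by
        rw [Complex.dist_eq]; exact (hmemS z).1 hzS
      obtain ⟨hwre, hwne, -⟩ := csqrt_dist hrj hwball
      have hsq : (csqrt (z^2))^2 = z^2 := csqrt_sq hwne
      have hfac : (csqrt (z^2) - z) * (csqrt (z^2) + z) = 0 := by linear_combination hsq
      rcases mul_eq_zero.mp hfac with h | h
      · exfalso
        have h1 := csqrt_re_pos hwre
        rw [sub_eq_zero.mp h] at h1
        linarith
      · have h2 : z = -csqrt (z^2) := by linear_combination h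
        exact ⟨z^2, by rwa [mem_closedBall], h2.symm⟩
    rw [hHtop j hj]
    exact Subset.antisymm hcomp_L
      (hLpc.isConnected.isPreconnected.subset_connectedComponentIn hmemL hLS)
  have K2 : ∀ j, 1 ≤ j → H j (M j - 1) ⊆ closedBall (-((Real.sqrt (-b j) : ℝ):ℂ)) 1 := by
    intro j hj
    rw [K1 j hj]
    rintro _ ⟨w, hw, rfl⟩
    rw [mem_closedBall] at hw ⊢
    exact (csqrt_dist (hr2 j hj) hw).2.2
  -- the main downward induction
  have main : ∀ k, 1 ≤ k → ∀ n m, M k - 1 = m + n →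
      IsPathConnected (H k m) ∧
      (∀ j, 1 ≤ j → j ≤ k → m = M j - 1 →
        H k m ⊆ closedBall (-((Real.sqrt (-b j) : ℝ):ℂ)) 1 ∧
          -((Real.sqrt (-b j) : ℝ):ℂ) ∈ H k m) ∧
      ((∀ j, 1 ≤ j → j ≤ k → m ≠ M j - 1) →
        H k m ⊆ closedBall 0 1 ∧ (0:ℂ) ∈ H k m) := by
    intro k hk n
    induction n with
    | zero =>
      intro m hm
      have hmeq : m = M k - 1 := by omega
      subst hmeq
      refine ⟨?_, ?_, ?_⟩
      · rw [K1 k hk]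
        apply IsPathConnected.image'
        · exact (convex_closedBall _ 2).isPathConnected ⟨_, mem_closedBall_self (by norm_num)⟩
        · intro w hw
          rw [mem_closedBall] at hw
          obtain ⟨hwre, -, -⟩ := csqrt_dist (hr2 k hk) hw
          exact ((csqrt_continuousAt hwre).continuousWithinAt).neg
      · intro j hj1 hjk hcon
        have hjeq : j = k := by
          rcases lt_trichotomy j k with h | h | h
          · have := hMlt j k h; have := hM2 j hj1; have := hM2 k hk; omega
          · exact h
          · have := hMlt k j h; have := hM2 j hj1; have := hM2 k hk; omega
        subst hjeq
        refine ⟨K2 j hj1, ?_⟩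
        rw [K1 j hj1]
        refine ⟨(((Real.sqrt (-b j))^2 : ℝ) : ℂ), mem_closedBall_self (by norm_num), ?_⟩
        show -csqrt (((Real.sqrt (-b j))^2 : ℝ) : ℂ) = -((Real.sqrt (-b j) : ℝ):ℂ)
        rw [csqrt_ofReal (by positivity)]
        congr 2
        exact Real.sqrt_sq (by linarith [hr2 j hj1])
      · intro hno
        exact absurd rfl (hno k hk le_rfl)
    | succ n ih =>
      intro m hm
      have hMk2 := hM2 k hk
      have hm1 : M k - 1 = (m+1) + n := by omega
      obtain ⟨ihp, ihA, ihB⟩ := ih (m+1) hm1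
      have hm2 : m + 2 ≤ M k := by omega
      by_cases hA : ∃ j, 1 ≤ j ∧ j ≤ k ∧ m + 1 = M j - 1
      · -- Case A : P (m+1) = z^2 + a j
        obtain ⟨j, hj1, hjk, hjm⟩ := hA
        have hMj2 := hM2 j hj1
        have hnoti : ∀ i, 1 ≤ i → m ≠ M i - 1 := by
          intro i hi1 hcon
          have hMi2 := hM2 i hi1
          rcases lt_trichotomy i j with h | h | h
          · have := hMlt i j h; omega
          · subst h; omega
          · have := hMlt j i h; omega
        have hdown := hHdown k hk m hm2 (fun i hi _ => hnoti i hi)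
        have hPm : P (m+1) = fun z => z^2 + a j := by
          rw [show m + 1 = M j - 1 from hjm]; exact hPa j hj1
        obtain ⟨hsubJ, hmemJ⟩ := ihA j hj1 hjk hjm
        have haj : a j = -((Real.sqrt (-b j) : ℝ):ℂ) := ha j hj1
        set T : Set ℂ := (fun u : ℂ => u - a j) '' H k (m+1) with hT
        have hset : H k m = (fun z : ℂ => z^2) ⁻¹' T := by
          rw [hdown, hPm]
          ext z
          simp only [mem_preimage, hT, mem_image]
          constructor
          · intro h
            exact ⟨z^2 + a j, h, by ring⟩
          · rintro ⟨u, hu, he⟩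
            have : u = z^2 + a j := by linear_combination he
            rwa [← this]
        have hTpc : IsPathConnected T :=
          ihp.image' ((continuous_id.sub continuous_const).continuousOn)
        have hT0 : (0:ℂ) ∈ T := ⟨a j, by rw [haj]; exact hmemJ, by ring⟩
        refine ⟨by rw [hset]; exact sq_preimage_pathConnected hT0 hTpc, ?_, ?_⟩
        · intro i hi1 _ hcon
          exact absurd hcon (hnoti i hi1)
        · intro _
          constructor
          · intro z hzm
            rw [hset] at hzm
            obtain ⟨u, hu, he⟩ := hzm
            have hd : dist u (-((Real.sqrt (-b j) : ℝ):ℂ)) ≤ 1 := hsubJ hu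
            rw [Complex.dist_eq, ← haj] at hd
            have habs : ‖z^2‖ ≤ 1 := by
              rw [show (z:ℂ)^2 = u - a j from he.symm]
              simpa [sub_neg_eq_add] using hd
            rw [mem_closedBall, Complex.dist_eq, sub_zero]
            rw [norm_pow] at habs
            nlinarith [norm_nonneg z]
          · rw [hset]
            show (0:ℂ)^2 ∈ T
            simpa using hT0
      · by_cases hB : ∃ j, 1 ≤ j ∧ j < k ∧ m + 1 = M j
        · -- Case B : P (m+1) = z^2 + b j, with intersection
          obtain ⟨j, hj1, hjk, hjm⟩ := hB
          have hMj2 := hM2 j hj1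
          have hrj := hr2 j hj1
          have hmeq : m = M j - 1 := by omega
          have hdown := hHdown' k hk m hm2 j hj1 hjk hmeq
          have hPm : P (m+1) = fun z => z^2 + ((b j : ℝ):ℂ) := by
            rw [hjm]; exact hPb j hj1
          have hnot1 : ∀ i, 1 ≤ i → i ≤ k → m + 1 ≠ M i - 1 := by
            intro i hi1 _ hcon
            have hMi2 := hM2 i hi1
            rcases lt_trichotomy i j with h | h | h
            · have := hMlt i j h; omega
            · subst h; omega
            · have := hMlt j i h; omega
          obtain ⟨hsub1, hmem1⟩ := ihB hnot1
          set c : ℂ := (((Real.sqrt (-b j))^2 : ℝ):ℂ) with hc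
          have hbc : ((b j : ℝ) : ℂ) = -c := by
            rw [hc, hrsq j hj1]; push_cast; ring
          set W : Set ℂ := (fun u : ℂ => u - ((b j : ℝ):ℂ)) '' H k (m+1) with hW
          have hWpc : IsPathConnected W :=
            ihp.image' ((continuous_id.sub continuous_const).continuousOn)
          have hWball : ∀ w ∈ W, dist w c ≤ 1 := by
            rintro _ ⟨u, hu, rfl⟩
            have hu1 : dist u 0 ≤ 1 := hsub1 hu
            rw [Complex.dist_eq, sub_zero] at hu1
            rw [Complex.dist_eq, hbc]
            calc ‖u - -c - c‖ = ‖u‖ := by ring_nf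
            _ ≤ 1 := hu1
          have hWball2 : ∀ w ∈ W, dist w c ≤ 2 := fun w hw => le_trans (hWball w hw) one_le_two
          have hcW : c ∈ W := ⟨0, hmem1, by rw [hbc]; ring⟩
          have hset : H k m = (fun w : ℂ => -csqrt w) '' W := by
            rw [hdown, hPm, K1 j hj1]
            ext z
            simp only [mem_inter_iff, mem_preimage, mem_image]
            constructor
            · rintro ⟨hz1, w', hw', hwz⟩
              have hz2W : (z:ℂ)^2 ∈ W := ⟨z^2 + ((b j:ℝ):ℂ), hz1, by ring⟩
              obtain ⟨hzre2, hzne2, -⟩ := csqrt_dist hrj (hWball2 _ hz2W)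
              rw [mem_closedBall] at hw'
              obtain ⟨hw're, -, -⟩ := csqrt_dist hrj hw'
              have hzre : z.re < 0 := by
                rw [← hwz]
                simp only [Complex.neg_re]
                linarith [csqrt_re_pos hw're]
              have hsq : (csqrt (z^2))^2 = z^2 := csqrt_sq hzne2
              have hfac : (csqrt (z^2) - z) * (csqrt (z^2) + z) = 0 := by
                linear_combination hsq
              rcases mul_eq_zero.mp hfac with h | h
              · exfalso
                have h1 := csqrt_re_pos hzre2
                rw [sub_eq_zero.mp h] at h1
                linarith
              · exact ⟨z^2, hz2W, by show -csqrt (z^2) = z; linear_combination -h⟩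
            · rintro ⟨w, hw, rfl⟩
              obtain ⟨u, hu, huw⟩ := hw
              obtain ⟨hwre, hwne, -⟩ := csqrt_dist hrj (hWball2 _ ⟨u, hu, huw⟩)
              have hsq : (-csqrt w)^2 = w := by
                subst huw
                rw [neg_pow]; simp [csqrt_sq hwne]
              constructor
              · rw [hsq, ← huw]
                simpa using hu
              · exact ⟨w, by rw [mem_closedBall]; exact hWball2 _ ⟨u, hu, huw⟩, rfl⟩
          have hpc : IsPathConnected (H k m) := by
            rw [hset]
            apply hWpc.image'
            intro w hw
            obtain ⟨hwre, -, -⟩ := csqrt_dist hrj (hWball2 w hw)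
            exact ((csqrt_continuousAt hwre).continuousWithinAt).neg
          refine ⟨hpc, ?_, ?_⟩
          · intro i hi1 hik hcon
            have hieq : i = j := by
              have hMi2 := hM2 i hi1
              rcases lt_trichotomy i j with h | h | h
              · have := hMlt i j h; omega
              · exact h
              · have := hMlt j i h; omega
            subst hieq
            constructor
            · rw [hset]
              rintro _ ⟨w, hw, rfl⟩
              rw [mem_closedBall]
              exact (csqrt_dist hrj (hWball2 w hw)).2.2
            · rw [hset]
              refine ⟨c, hcW, ?_⟩
              show -csqrt c = -((Real.sqrt (-b i) : ℝ):ℂ)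
              rw [hc, csqrt_ofReal (by positivity)]
              congr 2
              exact Real.sqrt_sq (by linarith)
          · intro hno
            exact absurd hmeq (hno j hj1 (le_of_lt hjk))
        · -- Case C : P (m+1) = z^2
          have hnotMi : ∀ i, 1 ≤ i → m + 1 ≠ M i - 1 ∧ m + 1 ≠ M i := by
            intro i hi1
            constructor
            · intro hcon
              by_cases hik : i ≤ k
              · exact hA ⟨i, hi1, hik, hcon⟩
              · push_neg at hik
                have := hMlt k i hik
                have := hM2 i hi1
                omega
            · intro hcon
              by_cases hik : i < k
              · exact hB ⟨i, hi1, hik, hcon⟩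
              · push_neg at hik
                rcases eq_or_lt_of_le hik with h | h
                · subst h; omega
                · have := hMlt k i h; omega
          have hPm : P (m+1) = fun z => z^2 := hPother (m+1) (by omega) hnotMi
          have hnotdown : ∀ i, 1 ≤ i → i < k → m ≠ M i - 1 := by
            intro i hi1 _ hcon
            have hMi2 := hM2 i hi1
            have := (hnotMi i hi1).2
            omega
          have hdown := hHdown k hk m hm2 hnotdown
          have hnot1 : ∀ i, 1 ≤ i → i ≤ k → m + 1 ≠ M i - 1 :=
            fun i hi1 _ => (hnotMi i hi1).1
          obtain ⟨hsub1, hmem1⟩ := ihB hnot1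
          have hset : H k m = (fun z : ℂ => z^2) ⁻¹' (H k (m+1)) := by
            rw [hdown, hPm]
          refine ⟨by rw [hset]; exact sq_preimage_pathConnected hmem1 ihp, ?_, ?_⟩
          · intro i hi1 hik hcon
            have hMi2 := hM2 i hi1
            have := (hnotMi i hi1).2
            omega
          · intro _
            constructor
            · intro z hz
              rw [hset] at hz
              have habs : ‖z^2‖ ≤ 1 := by
                have := hsub1 hz
                rwa [mem_closedBall, Complex.dist_eq, sub_zero] at this
              rw [mem_closedBall, Complex.dist_eq, sub_zero]
              rw [norm_pow] at habs
              nlinarith [norm_nonneg z]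
            · rw [hset]
              show (0:ℂ)^2 ∈ H k (m+1)
              simpa using hmem1
  -- conclusion
  intro k hk m
  rcases le_or_gt m (M k - 1) with h | h
  · have hdecomp : M k - 1 = m + (M k - 1 - m) := by omega
    obtain ⟨hpc, -, -⟩ := main k hk (M k - 1 - m) m hdecomp
    exact ⟨hpc, hpc.isConnected⟩
  · obtain ⟨hpc, -, -⟩ := main k hk 0 (M k - 1) (by omega)
    have hup := hHup k hk m (le_of_lt h)
    have hcont : Continuous (seqQ P (M k - 1) m) := seqQ_continuous P hPcont _ m
    rw [hup]
    exact ⟨hpc.image hcont, (hpc.image hcont).isConnected⟩
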